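/- Let K be a field and S = K[x,y,z]. Let W2 be the 12-dimensional subspace of S_5 spanned by the strongly stable set generated by xy^2z^2, namely the monomials x^5, x^4y, x^4z, x^3y^2, x^3yz, x^3z^2, x^2y^3, x^2y^2z, x^2yz^2, xy^4, xy^3z, xy^2z^2. Then for every j ≥ 1, dim_K W2^j = 6j^2 + 5j + 1. -/

import Mathlib

open MvPolynomial Finset Pointwise

noncomputable def Mm (K : Type*) [Field K] (a b c : ℕ) : MvPolynomial (Fin 3) K :=
  X 0 ^ a * X 1 ^ b * X 2 ^ c

lemma Mm_mul (K : Type*) [Field K] (a b c a' b' c' : ℕ) :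
    Mm K a b c * Mm K a' b' c' = Mm K (a+a') (b+b') (c+c') := by
  simp only [Mm, pow_add]; ring

lemma Mm_eq_monomial (K : Type*) [Field K] (a b c : ℕ) :
    Mm K a b c = monomial (Finsupp.single 0 a + Finsupp.single 1 b + Finsupp.single 2 c) (1 : K) := by
  simp [Mm, X_pow_eq_monomial, monomial_mul]

def Tset (K : Type*) [Field K] (j : ℕ) : Set (MvPolynomial (Fin 3) K) :=
  {p | ∃ a b c : ℕ, a + b + c = 5*j ∧ j ≤ a ∧ c ≤ 2*j ∧ p = Mm K a b c}

set_option maxHeartbeats 2000000 in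
lemma Tset_one (K : Type*) [Field K] :
    ({ X 0 ^ 5, X 0 ^ 4 * X 1, X 0 ^ 4 * X 2, X 0 ^ 3 * X 1 ^ 2, X 0 ^ 3 * X 1 * X 2,
       X 0 ^ 3 * X 2 ^ 2, X 0 ^ 2 * X 1 ^ 3, X 0 ^ 2 * X 1 ^ 2 * X 2,
       X 0 ^ 2 * X 1 * X 2 ^ 2, X 0 * X 1 ^ 4, X 0 * X 1 ^ 3 * X 2,
       X 0 * X 1 ^ 2 * X 2 ^ 2 } : Set (MvPolynomial (Fin 3) K)) = Tset K 1 := by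
  ext p
  constructor
  · intro hp
    simp only [Set.mem_insert_iff, Set.mem_singleton_iff] at hp
    rcases hp with h|h|h|h|h|h|h|h|h|h|h|h
    · exact ⟨5,0,0, by norm_num, by norm_num, by norm_num, by rw [h]; simp [Mm]⟩
    · exact ⟨4,1,0, by norm_num, by norm_num, by norm_num, by rw [h]; simp [Mm]⟩
    · exact ⟨4,0,1, by norm_num, by norm_num, by norm_num, by rw [h]; simp [Mm]⟩
    · exact ⟨3,2,0, by norm_num, by norm_num, by norm_num, by rw [h]; simp [Mm]⟩
    · exact ⟨3,1,1, by norm_num, by norm_num, by norm_num, by rw [h]; simp [Mm]⟩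
    · exact ⟨3,0,2, by norm_num, by norm_num, by norm_num, by rw [h]; simp [Mm]⟩
    · exact ⟨2,3,0, by norm_num, by norm_num, by norm_num, by rw [h]; simp [Mm]⟩
    · exact ⟨2,2,1, by norm_num, by norm_num, by norm_num, by rw [h]; simp [Mm]⟩
    · exact ⟨2,1,2, by norm_num, by norm_num, by norm_num, by rw [h]; simp [Mm]⟩
    · exact ⟨1,4,0, by norm_num, by norm_num, by norm_num, by rw [h]; simp [Mm]⟩
    · exact ⟨1,3,1, by norm_num, by norm_num, by norm_num, by rw [h]; simp [Mm]⟩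
    · exact ⟨1,2,2, by norm_num, by norm_num, by norm_num, by rw [h]; simp [Mm]⟩
  · rintro ⟨a,b,c,h1,h2,h3,rfl⟩
    simp only [mul_one] at h1 h3
    have ha5 : a ≤ 5 := by omega
    have hb5 : b ≤ 5 := by omega
    interval_cases c <;> interval_cases a <;> interval_cases b <;>
      first | (exfalso; omega) | simp [Mm]

lemma Tset_mul (K : Type*) [Field K] (j : ℕ) (hj : 1 ≤ j) :
    Tset K j * Tset K 1 = Tset K (j+1) := by
  ext p
  constructor
  · rintro ⟨x, ⟨a,b,c,h1,h2,h3,rfl⟩, y, ⟨a',b',c',h1',h2',h3',rfl⟩, rfl⟩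
    exact ⟨a+a', b+b', c+c', by omega, by omega, by omega,
      by simpa using Mm_mul K a b c a' b' c'⟩
  · rintro ⟨a,b,c,h1,h2,h3,rfl⟩
    set tc := min c 2 with htc
    set tb := min b (4 - tc) with htb
    set ta := 5 - tc - tb with hta
    refine ⟨Mm K (a-ta) (b-tb) (c-tc), ⟨a-ta, b-tb, c-tc, by omega, by omega, by omega, rfl⟩,
      Mm K ta tb tc, ⟨ta, tb, tc, by omega, by omega, by omega, rfl⟩, ?_⟩
    show Mm K (a-ta) (b-tb) (c-tc) * Mm K ta tb tc = Mm K a b c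
    rw [Mm_mul]
    congr 1 <;> omega

lemma Tset_pow (K : Type*) [Field K] :
    ∀ j : ℕ, 1 ≤ j →
    ({ X 0 ^ 5, X 0 ^ 4 * X 1, X 0 ^ 4 * X 2, X 0 ^ 3 * X 1 ^ 2, X 0 ^ 3 * X 1 * X 2,
       X 0 ^ 3 * X 2 ^ 2, X 0 ^ 2 * X 1 ^ 3, X 0 ^ 2 * X 1 ^ 2 * X 2,
       X 0 ^ 2 * X 1 * X 2 ^ 2, X 0 * X 1 ^ 4, X 0 * X 1 ^ 3 * X 2,
       X 0 * X 1 ^ 2 * X 2 ^ 2 } : Set (MvPolynomial (Fin 3) K)) ^ j = Tset K j := by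
  intro j hj
  induction j with
  | zero => omega
  | succ n ih =>
    rcases Nat.eq_or_lt_of_le hj with h1 | h1
    · rw [← h1, pow_one, Tset_one]
    · have hn : 1 ≤ n := by omega
      rw [pow_succ, ih hn, Tset_one, Tset_mul K n hn]

def Aset (j : ℕ) : Finset (ℕ × ℕ) :=
  ((range (5*j+1)) ×ˢ (range (2*j+1))).filter (fun p => j ≤ p.1 ∧ p.1 + p.2 ≤ 5*j)

lemma Aset_card (j : ℕ) : (Aset j).card = 6*j^2 + 5*j + 1 := by
  have hA : Aset j = (range (2*j+1)).biUnion
      (fun c => (Finset.Icc j (5*j - c)).image (fun a => (a, c))) := by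
    ext ⟨a, c⟩
    simp only [Aset, mem_filter, mem_product, mem_range, mem_biUnion, mem_image, mem_Icc,
      Prod.mk.injEq]
    constructor
    · rintro ⟨⟨_, _⟩, _, _⟩
      exact ⟨c, by omega, a, by omega, rfl, rfl⟩
    · rintro ⟨c', hc', a', ⟨h1, h2⟩, rfl, rfl⟩
      omega
  rw [hA, card_biUnion]
  · have h1 : ∀ c ∈ range (2*j+1),
        ((Finset.Icc j (5*j - c)).image (fun a => (a, c))).card = (2*j+1) + (2*j - c) := by
      intro c hc
      rw [mem_range] at hc
      rw [Finset.card_image_of_injective _ (fun x y h => (Prod.mk.injEq _ _ _ _ ▸ h).1),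
        Nat.card_Icc]
      omega
    rw [Finset.sum_congr rfl h1, Finset.sum_add_distrib, Finset.sum_const, smul_eq_mul]
    have h2 : ∑ c ∈ range (2*j+1), (2*j - c) = ∑ c ∈ range (2*j+1), c := by
      rw [← Finset.sum_range_reflect]
      apply Finset.sum_congr rfl
      intro i hi
      rw [mem_range] at hi
      omega
    rw [h2]
    have h3 := Finset.sum_range_id_mul_two (2*j+1)
    have h4 : ∑ c ∈ range (2*j+1), c = 2*j^2 + j := by
      have : (∑ c ∈ range (2*j+1), c) * 2 = (2*j^2 + j) * 2 := by
        rw [h3, Nat.add_sub_cancel]; ring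
      omega
    rw [h4, card_range]; ring
  · intro x hx y hy hxy
    simp only [Finset.disjoint_left, mem_image]
    rintro p ⟨a, _, rfl⟩ ⟨a', _, h⟩
    exact hxy (by simpa using (Prod.mk.injEq _ _ _ _ ▸ h).2.symm ▸ rfl)

noncomputable def eEx (j : ℕ) (p : ℕ × ℕ) : Fin 3 →₀ ℕ :=
  Finsupp.single 0 p.1 + Finsupp.single 1 (5*j - p.1 - p.2) + Finsupp.single 2 p.2

lemma eEx_injective (j : ℕ) : Function.Injective (eEx j) := by
  intro p q h
  have h0 := DFunLike.congr_fun h (0 : Fin 3)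
  have h2 := DFunLike.congr_fun h (2 : Fin 3)
  simp [eEx, Finsupp.single_apply, Fin.ext_iff] at h0 h2
  exact Prod.ext h0 h2

noncomputable def Dset (j : ℕ) : Finset (Fin 3 →₀ ℕ) := (Aset j).image (eEx j)

lemma Dset_card (j : ℕ) : (Dset j).card = 6*j^2 + 5*j + 1 := by
  rw [Dset, Finset.card_image_of_injective _ (eEx_injective j), Aset_card]

noncomputable def Fset (K : Type*) [Field K] (j : ℕ) : Finset (MvPolynomial (Fin 3) K) :=
  (Dset j).map ⟨fun d => monomial d (1 : K), monomial_left_injective one_ne_zero⟩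

lemma Fset_card (K : Type*) [Field K] (j : ℕ) : (Fset K j).card = 6*j^2 + 5*j + 1 := by
  rw [Fset, Finset.card_map, Dset_card]

lemma Tset_eq_Fset (K : Type*) [Field K] (j : ℕ) :
    Tset K j = (Fset K j : Set (MvPolynomial (Fin 3) K)) := by
  ext p
  simp only [Tset, Set.mem_setOf_eq, Fset, Dset, Finset.coe_map, Set.mem_image,
    Function.Embedding.coeFn_mk, Finset.coe_image, Finset.mem_coe, Finset.mem_image,
    Aset, mem_filter, mem_product, mem_range]
  constructor
  · rintro ⟨a, b, c, h1, h2, h3, rfl⟩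
    have hb : 5*j - a - c = b := by omega
    refine ⟨eEx j (a, c), ⟨(a, c), ⟨⟨by dsimp only; omega, by dsimp only; omega⟩,
      by dsimp only; omega, by dsimp only; omega⟩, rfl⟩, ?_⟩
    rw [Mm_eq_monomial]
    simp only [eEx, hb]
  · rintro ⟨d, ⟨⟨a, c⟩, ⟨⟨ha, hc⟩, hja, hac⟩, rfl⟩, rfl⟩
    dsimp only at ha hc hja hac
    exact ⟨a, 5*j - a - c, c, by omega, by omega, by omega,
      by rw [Mm_eq_monomial]; simp only [eEx]⟩

set_option maxHeartbeats 1000000 in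
theorem stmt_6 (K : Type*) [Field K]
    (W2 : Submodule K (MvPolynomial (Fin 3) K))
    (hW2 : W2 = Submodule.span K
      ({ X 0 ^ 5, X 0 ^ 4 * X 1, X 0 ^ 4 * X 2, X 0 ^ 3 * X 1 ^ 2, X 0 ^ 3 * X 1 * X 2,
         X 0 ^ 3 * X 2 ^ 2, X 0 ^ 2 * X 1 ^ 3, X 0 ^ 2 * X 1 ^ 2 * X 2,
         X 0 ^ 2 * X 1 * X 2 ^ 2, X 0 * X 1 ^ 4, X 0 * X 1 ^ 3 * X 2,
         X 0 * X 1 ^ 2 * X 2 ^ 2 } : Set (MvPolynomial (Fin 3) K))) :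
    ∀ j : ℕ, 1 ≤ j → Module.finrank K ↥(W2 ^ j) = 6 * j ^ 2 + 5 * j + 1 := by
  intro j hj
  have hW : W2 ^ j = Submodule.span K ((Fset K j : Finset (MvPolynomial (Fin 3) K)) : Set (MvPolynomial (Fin 3) K)) := by
    rw [hW2, Submodule.span_pow, Tset_pow K j hj, Tset_eq_Fset K j]
  have hcong := congrArg (fun W : Submodule K (MvPolynomial (Fin 3) K) => Module.finrank K ↥W) hW
  refine hcong.trans ?_
  show Module.finrank K ↥(Submodule.span K ((Fset K j : Finset (MvPolynomial (Fin 3) K)) : Set (MvPolynomial (Fin 3) K))) = 6 * j ^ 2 + 5 * j + 1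
  have hsub : (Fset K j : Set (MvPolynomial (Fin 3) K)) ⊆
      Set.range ⇑(basisMonomials (Fin 3) K) := by
    intro p hp
    simp only [Fset, Finset.coe_map, Set.mem_image, Function.Embedding.coeFn_mk,
      Finset.mem_coe] at hp
    rcases hp with ⟨d, _, rfl⟩
    exact ⟨d, rfl⟩
  have hli : LinearIndependent K (fun x : (Fset K j : Set (MvPolynomial (Fin 3) K)) => (x : MvPolynomial (Fin 3) K)) :=
    ((linearIndepOn_id_range_iff (basisMonomials (Fin 3) K).injective).mpr (basisMonomials (Fin 3) K).linearIndependent).mono hsub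
  rw [finrank_span_finset_eq_card hli, Fset_card]
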